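/- Strict convexity and explicit minimizer of the computing-time function with positive overhead (equation (14), case τ₀ > 0): For constants a > 0 and b > 0, the function CT*(x) = e^x (a + b/x) on (0, ∞) is strictly convex (its second derivative is strictly positive on (0,∞)), and it attains its unique global minimum at x* = (−b + √(b² + 4ab)) / (2a). -/

import Mathlib

open Set

private lemma ct_deriv1 (a b : ℝ) (CT : ℝ → ℝ)
    (hCT : ∀ x, CT x = Real.exp x * (a + b / x)) :
    ∀ x : ℝ, x ≠ 0 → HasDerivAt CT (Real.exp x * (a + b / x - b / x ^ 2)) x := by
  intro x hx
  have hfun : CT = fun y => Real.exp y * (a + b / y) := funext hCT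
  rw [hfun]
  have h1 : HasDerivAt (fun y : ℝ => a + b / y) (0 - b / x ^ 2) x := by
    have := ((hasDerivAt_const x b).div (hasDerivAt_id x) hx)
    have h0 := (hasDerivAt_const x a).add this
    exact h0.congr_deriv (by simp only [id]; field_simp; ring)
  have := (Real.hasDerivAt_exp x).mul h1
  exact this.congr_deriv (by ring)

private lemma ct_deriv2 (a b : ℝ) (CT : ℝ → ℝ)
    (hCT : ∀ x, CT x = Real.exp x * (a + b / x)) :
    ∀ x : ℝ, x ≠ 0 →
      HasDerivAt (deriv CT)
        (Real.exp x * (a + b / x - 2 * b / x ^ 2 + 2 * b / x ^ 3)) x := by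
  intro x hx
  set g : ℝ → ℝ := fun y => Real.exp y * (a + b / y - b / y ^ 2) with hg
  have hgd : HasDerivAt g (Real.exp x * (a + b / x - 2 * b / x ^ 2 + 2 * b / x ^ 3)) x := by
    have hx2 : (x : ℝ) ^ 2 ≠ 0 := pow_ne_zero _ hx
    have h1 : HasDerivAt (fun y : ℝ => b / y) (-(b / x ^ 2)) x := by
      have := (hasDerivAt_const x b).div (hasDerivAt_id x) hx
      exact this.congr_deriv (by simp only [id]; field_simp; ring)
    have h2 : HasDerivAt (fun y : ℝ => b / y ^ 2) (-(2 * b / x ^ 3)) x := by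
      have := (hasDerivAt_const x b).div (hasDerivAt_pow 2 x) hx2
      exact this.congr_deriv (by field_simp; ring)
    have h3 : HasDerivAt (fun y : ℝ => a + b / y - b / y ^ 2)
        (0 + -(b / x ^ 2) - -(2 * b / x ^ 3)) x := ((hasDerivAt_const x a).add h1).sub h2
    have := (Real.hasDerivAt_exp x).mul h3
    exact this.congr_deriv (by ring)
  apply hgd.congr_of_eventuallyEq
  have hne : ∀ᶠ y in nhds x, y ≠ 0 := eventually_ne_nhds hx
  filter_upwards [hne] with y hy
  exact ((ct_deriv1 a b CT hCT y hy).deriv)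

theorem computing_time_strict_convex_and_minimizer
    (a b : ℝ) (ha : 0 < a) (hb : 0 < b)
    (CT : ℝ → ℝ) (hCT : ∀ x, CT x = Real.exp x * (a + b / x))
    (xstar : ℝ) (hxstar : xstar = (-b + Real.sqrt (b ^ 2 + 4 * a * b)) / (2 * a)) :
    (∀ x ∈ Ioi (0 : ℝ), 0 < deriv (deriv CT) x) ∧
    StrictConvexOn ℝ (Ioi (0 : ℝ)) CT ∧
    xstar ∈ Ioi (0 : ℝ) ∧
    (∀ x ∈ Ioi (0 : ℝ), x ≠ xstar → CT xstar < CT x) := by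
  have hd1 := ct_deriv1 a b CT hCT
  have hd2 := ct_deriv2 a b CT hCT
  -- second derivative positive
  have hpos2 : ∀ x ∈ Ioi (0 : ℝ), 0 < deriv (deriv CT) x := by
    intro x hx
    have hx0 : (0 : ℝ) < x := hx
    rw [(hd2 x hx0.ne').deriv]
    have key : a + b / x - 2 * b / x ^ 2 + 2 * b / x ^ 3
        = (a * x ^ 3 + b * (x ^ 2 - 2 * x + 2)) / x ^ 3 := by
      field_simp; ring
    have hnum : 0 < a * x ^ 3 + b * (x ^ 2 - 2 * x + 2) := by
      nlinarith [sq_nonneg (x - 1), pow_pos hx0 3]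
    have := div_pos hnum (pow_pos hx0 3)
    rw [key]
    positivity
  -- continuity / differentiability
  have hdiff : ∀ x ∈ Ioi (0 : ℝ), DifferentiableAt ℝ CT x :=
    fun x hx => (hd1 x (ne_of_gt hx)).differentiableAt
  have hcont : ContinuousOn CT (Ici (0 : ℝ) \ {0}) := by
    intro x hx
    exact ((hd1 x hx.2).differentiableAt.continuousAt).continuousWithinAt
  have hcontIoi : ContinuousOn CT (Ioi (0 : ℝ)) :=
    fun x hx => ((hd1 x (ne_of_gt hx)).differentiableAt.continuousAt).continuousWithinAt
  have hconv : StrictConvexOn ℝ (Ioi (0 : ℝ)) CT := by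
    apply strictConvexOn_of_deriv2_pos (convex_Ioi 0) hcontIoi
    intro x hx
    rw [interior_Ioi] at hx
    simpa [Function.iterate_succ, Function.comp] using hpos2 x hx
  -- xstar positive
  have hs : Real.sqrt (b ^ 2 + 4 * a * b) > b := by
    have h1 : b ^ 2 < b ^ 2 + 4 * a * b := by nlinarith
    have := Real.sqrt_lt_sqrt (by positivity) h1
    rwa [Real.sqrt_sq hb.le] at this
  have hxstar_pos : (0 : ℝ) < xstar := by
    rw [hxstar]
    apply div_pos (by linarith) (by linarith)
  -- derivative vanishes at xstar
  have hsq : Real.sqrt (b ^ 2 + 4 * a * b) ^ 2 = b ^ 2 + 4 * a * b :=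
    Real.sq_sqrt (by positivity)
  have hcrit : deriv CT xstar = 0 := by
    rw [(hd1 xstar hxstar_pos.ne').deriv]
    have hx0 : xstar ≠ 0 := hxstar_pos.ne'
    have hroot : a * xstar ^ 2 + b * xstar - b = 0 := by
      rw [hxstar]
      field_simp
      nlinarith [Real.sq_sqrt (show (0:ℝ) ≤ b * (b + a * 4) by positivity)]
    have : a + b / xstar - b / xstar ^ 2 = (a * xstar ^ 2 + b * xstar - b) / xstar ^ 2 := by
      field_simp
    rw [this, hroot, zero_div, mul_zero]
  -- deriv CT strictly monotone on Ioi 0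
  have hcontd : ContinuousOn (deriv CT) (Ioi (0 : ℝ)) :=
    fun x hx => ((hd2 x (ne_of_gt hx)).differentiableAt.continuousAt).continuousWithinAt
  have hmono : StrictMonoOn (deriv CT) (Ioi (0 : ℝ)) := by
    apply strictMonoOn_of_deriv_pos (convex_Ioi 0) hcontd
    intro x hx
    rw [interior_Ioi] at hx
    exact hpos2 x hx
  refine ⟨hpos2, hconv, hxstar_pos, ?_⟩
  intro x hx hne
  have hx0 : (0 : ℝ) < x := hx
  rcases lt_or_gt_of_ne hne with hlt | hgt
  · -- x < xstar : deriv negative on (x, xstar)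
    obtain ⟨c, hc, hceq⟩ := exists_deriv_eq_slope CT hlt
      (hcontIoi.mono (by intro y hy; exact lt_of_lt_of_le hx0 hy.1))
      (fun y hy => ((hd1 y (ne_of_gt (lt_trans hx0 hy.1))).differentiableAt).differentiableWithinAt)
    have hcpos : (0 : ℝ) < c := lt_trans hx0 hc.1
    have hdc : deriv CT c < 0 := by
      have := hmono (mem_Ioi.mpr hcpos) (mem_Ioi.mpr hxstar_pos) hc.2
      rwa [hcrit] at this
    have hslope : (CT xstar - CT x) / (xstar - x) < 0 := hceq ▸ hdc
    have hdenom : (0 : ℝ) < xstar - x := by linarith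
    nlinarith [(div_lt_iff₀ hdenom).mp hslope]
  · -- xstar < x : deriv positive on (xstar, x)
    obtain ⟨c, hc, hceq⟩ := exists_deriv_eq_slope CT hgt
      (hcontIoi.mono (by intro y hy; exact lt_of_lt_of_le hxstar_pos hy.1))
      (fun y hy => ((hd1 y (ne_of_gt (lt_trans hxstar_pos hy.1))).differentiableAt).differentiableWithinAt)
    have hcpos : (0 : ℝ) < c := lt_trans hxstar_pos hc.1
    have hdc : 0 < deriv CT c := by
      have := hmono (mem_Ioi.mpr hxstar_pos) (mem_Ioi.mpr hcpos) hc.1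
      rwa [hcrit] at this
    have hslope : 0 < (CT x - CT xstar) / (x - xstar) := hceq ▸ hdc
    have hdenom : (0 : ℝ) < x - xstar := by linarith
    nlinarith [(lt_div_iff₀ hdenom).mp hslope]
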